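/- Let (Ω,Σ,μ) be a finite measure space with μ(Ω) > 0, 1 ≤ p < ∞, (M,d) a metric space, S ⊆ M a countable subset, K > 0, and T : S → L^p(μ) a map that is pointwise K-Lipschitz μ-a.e., i.e., for every x,y ∈ S, |T(x) − T(y)| ≤ K·d(x,y) holds μ-almost everywhere. Then there exist: a map T̂ : M → L^p(μ) extending T with |T̂(x) − T̂(y)| ≤ K·d(x,y) μ-a.e. for all x,y ∈ M; a complete metric space (N,D); a map j : M → N with dense range satisfying D(j(x),j(y)) = (1/(K·μ(Ω)^{1/p}))·‖T̂(x) − T̂(y)‖_{L^p(μ)} for all x,y ∈ M (so j is 1-Lipschitz); and a map T̄ : N → L^p(μ) that is Lipschitz with constant K·μ(Ω)^{1/p} and satisfies T̂ = T̄ ∘ j. -/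

import Mathlib

open MeasureTheory
open scoped ENNReal NNReal

/-- Type synonym carrying the pseudometric pulled back along `f`. -/
def PullbackSpace {α : Type*} {E : Type*} (f : α → E) : Type _ := α

instance {α : Type*} {E : Type*} [PseudoMetricSpace E] (f : α → E) :
    PseudoMetricSpace (PullbackSpace f) :=
  PseudoMetricSpace.induced f inferInstance

/-- The identity map into the pullback space. -/
def PullbackSpace.mk {α : Type*} {E : Type*} (f : α → E) (x : α) : PullbackSpace f := x

theorem PullbackSpace.dist_eq {α : Type*} {E : Type*} [PseudoMetricSpace E] (f : α → E)
    (x y : α) : dist (PullbackSpace.mk f x) (PullbackSpace.mk f y) = dist (f x) (f y) := rfl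

theorem PullbackSpace.mk_surjective {α : Type*} {E : Type*} (f : α → E) :
    Function.Surjective (PullbackSpace.mk f) := fun y => ⟨y, rfl⟩

/-- A pointwise `K`-Lipschitz `μ`-a.e. map `T` defined on a countable subset
`S` of a metric space `M` with values in `L^p(μ)` (`μ` finite with `μ(Ω) > 0`, `1 ≤ p < ∞`)
extends to a pointwise `K`-Lipschitz `μ`-a.e. map `T̂ : M → L^p(μ)`, which in turn factors as
`T̂ = T̄ ∘ j` through a complete metric space `N`, where `j : M → N` has dense range and
satisfies `dist (j x) (j y) = (1/(K·μ(Ω)^(1/p)))·‖T̂ x − T̂ y‖` (so `j` is `1`-Lipschitz),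
and `T̄ : N → L^p(μ)` is Lipschitz with constant `K·μ(Ω)^(1/p)`. -/
theorem ae_pointwise_lipschitz_extension_and_maximal_factorization_Lp.{u}
    {Ω : Type*} [MeasurableSpace Ω] (μ : Measure Ω) [IsFiniteMeasure μ]
    (hμ : 0 < μ Set.univ)
    (p : ℝ≥0∞) (hp : 1 ≤ p) (hp' : p ≠ ∞)
    {M : Type u} [MetricSpace M] (S : Set M) (hS : S.Countable)
    (K : ℝ) (hK : 0 < K) (T : S → Lp ℝ p μ)
    (hT : ∀ x y : S, ∀ᵐ ω ∂μ, |T x ω - T y ω| ≤ K * dist (x : M) (y : M)) :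
    ∃ (That : M → Lp ℝ p μ) (N : Type u) (_ : MetricSpace N)
      (j : M → N) (Tbar : N → Lp ℝ p μ),
      (∀ x : S, That x = T x) ∧
      (∀ x y : M, ∀ᵐ ω ∂μ, |That x ω - That y ω| ≤ K * dist x y) ∧
      CompleteSpace N ∧
      DenseRange j ∧
      (∀ x y : M, dist (j x) (j y) =
        (1 / (K * (μ Set.univ).toReal ^ (1 / p.toReal))) * ‖That x - That y‖) ∧
      (∀ a b : N, dist (Tbar a) (Tbar b) ≤
        K * (μ Set.univ).toReal ^ (1 / p.toReal) * dist a b) ∧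
      (∀ x : M, That x = Tbar (j x)) := by
  haveI : Fact (1 ≤ p) := ⟨hp⟩
  -- Step 1: construct the extension `That` with its two properties.
  have main : ∃ That : M → Lp ℝ p μ, (∀ x : S, That x = T x) ∧
      (∀ x y : M, ∀ᵐ ω ∂μ, |That x ω - That y ω| ≤ K * dist x y) := by
    by_cases hSne : Nonempty S
    · -- choose a surjection `f : ℕ → S`
      haveI := hS.to_subtype
      obtain ⟨f, hf⟩ := exists_surjective_nat S
      -- strongly measurable representatives
      set g : ℕ → Ω → ℝ := fun n => (Lp.aestronglyMeasurable (T (f n))).mk _ with hg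
      have hmeas : ∀ n, Measurable (g n) := fun n =>
        (Lp.aestronglyMeasurable (T (f n))).stronglyMeasurable_mk.measurable
      have haeq : ∀ n, (T (f n) : Ω → ℝ) =ᵐ[μ] g n := fun n =>
        (Lp.aestronglyMeasurable (T (f n))).ae_eq_mk
      have hgood : ∀ᵐ ω ∂μ, ∀ n m : ℕ,
          |g n ω - g m ω| ≤ K * dist (f n : M) (f m : M) := by
        rw [ae_all_iff]; intro n; rw [ae_all_iff]; intro m
        filter_upwards [hT (f n) (f m), haeq n, haeq m] with ω h h1 h2
        rw [← h1, ← h2]; exact h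
      -- McShane-type extension
      set G : M → Ω → ℝ := fun x ω => ⨅ n : ℕ, (g n ω + K * dist x (f n : M)) with hG
      -- basic estimates at good points
      have key : ∀ ω, (∀ n m : ℕ, |g n ω - g m ω| ≤ K * dist (f n : M) (f m : M)) →
          (∀ x : M, BddBelow (Set.range fun n : ℕ => g n ω + K * dist x (f n : M))) := by
        intro ω hω x
        refine ⟨g 0 ω - K * dist x (f 0 : M), ?_⟩
        rintro _ ⟨n, rfl⟩
        have h1 : g 0 ω - g n ω ≤ K * dist (f n : M) (f 0 : M) := by
          have := hω 0 n
          rw [abs_sub_le_iff] at this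
          simpa [dist_comm] using this.1
        have h2 : dist (f n : M) (f 0 : M) ≤ dist x (f n : M) + dist x (f 0 : M) := by
          rw [dist_comm (x) (f n : M)]
          exact dist_triangle _ _ _
        have h3 := mul_le_mul_of_nonneg_left h2 hK.le
        simp only [Function.comp] at *
        linarith
      have hbound : ∀ ω, (∀ n m : ℕ, |g n ω - g m ω| ≤ K * dist (f n : M) (f m : M)) →
          ∀ x : M, |G x ω - g 0 ω| ≤ K * dist x (f 0 : M) := by
        intro ω hω x
        have hbb := key ω hω x
        rw [abs_sub_le_iff]
        constructor
        · have h0 : G x ω ≤ g 0 ω + K * dist x (f 0 : M) := ciInf_le hbb 0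
          linarith
        · have h1 : g 0 ω - K * dist x (f 0 : M) ≤ G x ω := by
            refine le_ciInf fun n => ?_
            have h1 : g 0 ω - g n ω ≤ K * dist (f n : M) (f 0 : M) := by
              have := hω 0 n
              rw [abs_sub_le_iff] at this
              simpa [dist_comm] using this.1
            have h2 : dist (f n : M) (f 0 : M) ≤ dist x (f n : M) + dist x (f 0 : M) := by
              rw [dist_comm (x) (f n : M)]
              exact dist_triangle _ _ _
            have h3 := mul_le_mul_of_nonneg_left h2 hK.le
            linarith
          linarith
      have hlip : ∀ ω, (∀ n m : ℕ, |g n ω - g m ω| ≤ K * dist (f n : M) (f m : M)) →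
          ∀ x y : M, |G x ω - G y ω| ≤ K * dist x y := by
        intro ω hω x y
        have hx := key ω hω x
        have hy := key ω hω y
        have haux : ∀ u v : M, BddBelow (Set.range fun n : ℕ => g n ω + K * dist v (f n : M)) →
            G u ω - G v ω ≤ K * dist u v := by
          intro u v hbv
          have : ∀ n : ℕ, G u ω - K * dist u v ≤ g n ω + K * dist v (f n : M) := by
            intro n
            have h1 : G u ω ≤ g n ω + K * dist u (f n : M) := ciInf_le (key ω hω u) n
            have h2 : dist u (f n : M) ≤ dist u v + dist v (f n : M) := dist_triangle _ _ _
            have h3 := mul_le_mul_of_nonneg_left h2 hK.le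
            linarith
          have := le_ciInf this
          linarith
        rw [abs_sub_le_iff]
        exact ⟨haux x y hy, by rw [dist_comm]; exact haux y x hx⟩
      have hval : ∀ ω, (∀ n m : ℕ, |g n ω - g m ω| ≤ K * dist (f n : M) (f m : M)) →
          ∀ n : ℕ, G (f n : M) ω = g n ω := by
        intro ω hω n
        apply le_antisymm
        · have := ciInf_le (key ω hω (f n : M)) n
          simpa using this
        · refine le_ciInf fun m => ?_
          have h1 : g n ω - g m ω ≤ K * dist (f n : M) (f m : M) := by
            have := hω n m
            rw [abs_sub_le_iff] at this
            exact this.1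
          linarith
      -- membership in Lp
      have hmeasG : ∀ x : M, Measurable (G x) := fun x =>
        Measurable.iInf fun n => (hmeas n).add_const _
      have hmem : ∀ x : M, MemLp (G x) p μ := by
        intro x
        have h1 : MemLp (g 0) p μ := (Lp.memLp (T (f 0))).ae_eq (haeq 0)
        have h2 : MemLp (fun ω => G x ω - g 0 ω) p μ := by
          refine MemLp.of_bound (((hmeasG x).sub (hmeas 0)).aestronglyMeasurable)
            (K * dist x (f 0 : M)) ?_
          filter_upwards [hgood] with ω hω
          simpa [Real.norm_eq_abs] using hbound ω hω x
        have := h1.add h2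
        have heq : (g 0 + fun ω => G x ω - g 0 ω) = G x := by
          funext ω; simp only [Pi.add_apply]; ring
        rwa [heq] at this
      refine ⟨fun x => (hmem x).toLp (G x), ?_, ?_⟩
      · intro x
        obtain ⟨n, hn⟩ := hf x
        rw [← hn]
        apply Lp.ext
        filter_upwards [(hmem ((f n : M))).coeFn_toLp, hgood, haeq n] with ω h1 h2 h3
        rw [h1, hval ω h2 n, ← h3]
      · intro x y
        filter_upwards [(hmem x).coeFn_toLp, (hmem y).coeFn_toLp, hgood] with ω h1 h2 h3
        rw [h1, h2]
        exact hlip ω h3 x y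
    · -- `S` is empty: take the constant map `0`.
      refine ⟨fun _ => 0, fun x => (hSne ⟨x⟩).elim, fun x y => ?_⟩
      filter_upwards [Lp.coeFn_zero ℝ p μ] with ω h
      rw [h]
      simp only [Pi.zero_apply, sub_zero, abs_zero]
      positivity
  obtain ⟨That, hext, hlipae⟩ := main
  -- Step 2: the factorization through the completion of the pullback pseudometric.
  set ν : ℝ := (μ Set.univ).toReal ^ (1 / p.toReal) with hνdef
  have hν : 0 < ν :=
    Real.rpow_pos_of_pos (ENNReal.toReal_pos hμ.ne' (measure_ne_top μ _)) _
  set c : ℝ := 1 / (K * ν) with hcdef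
  have hc : 0 < c := by positivity
  set Φ : M → Lp ℝ p μ := fun x => c • That x with hΦ
  have hdistΦ : ∀ x y : M, dist (Φ x) (Φ y) = c * ‖That x - That y‖ := by
    intro x y
    rw [dist_eq_norm, hΦ]
    simp only [← smul_sub, norm_smul, Real.norm_eq_abs, abs_of_pos hc]
  refine ⟨That, UniformSpace.Completion (PullbackSpace Φ), inferInstance,
    fun x => ((PullbackSpace.mk Φ x : PullbackSpace Φ) : UniformSpace.Completion (PullbackSpace Φ)),
    ?_, hext, hlipae, inferInstance, ?_, ?_, ?_, ?_⟩
  · -- Tbar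
    exact UniformSpace.Completion.extension (fun x : PullbackSpace Φ => That x)
  · -- dense range
    exact UniformSpace.Completion.denseRange_coe.comp
      (PullbackSpace.mk_surjective Φ).denseRange
      (UniformSpace.Completion.continuous_coe _)
  · -- dist formula
    intro x y
    rw [UniformSpace.Completion.dist_eq, PullbackSpace.dist_eq, hdistΦ]
  · -- Lipschitz bound for Tbar
    have hlipT : LipschitzWith ⟨K * ν, by positivity⟩ (fun x : PullbackSpace Φ => That x) := by
      apply LipschitzWith.of_dist_le_mul
      intro x y
      have : dist x y = c * ‖That x - That y‖ := by
        rw [show dist x y = dist (Φ x) (Φ y) from rfl]; exact hdistΦ x y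
      rw [dist_eq_norm, this]
      show ‖That x - That y‖ ≤ (K * ν) * (1 / (K * ν) * ‖That x - That y‖)
      have hKν : K * ν ≠ 0 := by positivity
      field_simp
      exact le_rfl
    intro a b
    have := (hlipT.completion_extension).dist_le_mul a b
    exact this
  · -- factorization
    intro x
    have hlipT : LipschitzWith ⟨K * ν, by positivity⟩ (fun x : PullbackSpace Φ => That x) := by
      apply LipschitzWith.of_dist_le_mul
      intro x y
      have : dist x y = c * ‖That x - That y‖ := by
        rw [show dist x y = dist (Φ x) (Φ y) from rfl]; exact hdistΦ x y
      rw [dist_eq_norm, this]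
      show ‖That x - That y‖ ≤ (K * ν) * (1 / (K * ν) * ‖That x - That y‖)
      have hKν : K * ν ≠ 0 := by positivity
      field_simp
      exact le_rfl
    exact (UniformSpace.Completion.extension_coe hlipT.uniformContinuous
      (PullbackSpace.mk Φ x)).symm
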